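/- Let U : ℝ × ℝ → Matrix (Fin m) (Fin n) ℂ be a twice continuously differentiable family of complex m×n matrices, written U(t,x) (t a modulus parameter, x a space coordinate), satisfying U(t,x)ᴴ · U(t,x) = 1ₙ for all (t,x). Set P(t,x) = U(t,x) · U(t,x)ᴴ, A(t,x) = U(t,x)ᴴ · ∂ₓU(t,x) and A_t(t,x) = U(t,x)ᴴ · ∂ₜU(t,x). If ∂ₜP(t,x) = 0 for all (t,x), then at every point ∂ₜA = ∂ₓA_t + A·A_t − A_t·A (i.e. the variation of the connection is the covariant derivative of A_t). -/

import Mathlib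

open Matrix

/-- Entrywise partial derivative in the first (modulus) direction. -/
noncomputable def Dt {m n : ℕ} (F : ℝ × ℝ → Matrix (Fin m) (Fin n) ℂ) (p : ℝ × ℝ) :
    Matrix (Fin m) (Fin n) ℂ :=
  fun i j => fderiv ℝ (fun q => F q i j) p (1, 0)

/-- Entrywise partial derivative in the second (space) direction. -/
noncomputable def Dx {m n : ℕ} (F : ℝ × ℝ → Matrix (Fin m) (Fin n) ℂ) (p : ℝ × ℝ) :
    Matrix (Fin m) (Fin n) ℂ :=
  fun i j => fderiv ℝ (fun q => F q i j) p (0, 1)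

/-- Entrywise partial derivative in an arbitrary direction. -/
noncomputable def Dv {m n : ℕ} (v : ℝ × ℝ) (F : ℝ × ℝ → Matrix (Fin m) (Fin n) ℂ)
    (p : ℝ × ℝ) : Matrix (Fin m) (Fin n) ℂ :=
  fun i j => fderiv ℝ (fun q => F q i j) p v

lemma Dt_eq_Dv {m n : ℕ} (F : ℝ × ℝ → Matrix (Fin m) (Fin n) ℂ) (p : ℝ × ℝ) :
    Dt F p = Dv (1, 0) F p := rfl

lemma Dx_eq_Dv {m n : ℕ} (F : ℝ × ℝ → Matrix (Fin m) (Fin n) ℂ) (p : ℝ × ℝ) :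
    Dx F p = Dv (0, 1) F p := rfl

/-- Product rule for the entrywise directional derivative of a matrix product. -/
lemma matDerivMul {m n k : ℕ} (F : ℝ × ℝ → Matrix (Fin m) (Fin n) ℂ)
    (G : ℝ × ℝ → Matrix (Fin n) (Fin k) ℂ) (p v : ℝ × ℝ)
    (hF : ∀ i j, DifferentiableAt ℝ (fun q => F q i j) p)
    (hG : ∀ i j, DifferentiableAt ℝ (fun q => G q i j) p) :
    Dv v (fun q => F q * G q) p = Dv v F p * G p + F p * Dv v G p := by
  funext i j
  show fderiv ℝ (fun q => (F q * G q) i j) p v = _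
  have h1 : (fun q => (F q * G q) i j) = fun q => ∑ l, F q i l * G q l j := by
    funext q; simp [Matrix.mul_apply]
  rw [h1, fderiv_fun_sum (A := fun l q => F q i l * G q l j) (fun l _ => (hF i l).mul (hG l j))]
  simp only [ContinuousLinearMap.coe_sum', Finset.sum_apply]
  have h2 : ∀ l : Fin n, (fderiv ℝ (fun q => F q i l * G q l j) p) v =
      (fderiv ℝ (fun q => F q i l) p v) * G p l j
        + F p i l * (fderiv ℝ (fun q => G q l j) p v) := by
    intro l
    rw [fderiv_fun_mul (hF i l) (hG l j)]
    simp [smul_eq_mul]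
    ring
  rw [Finset.sum_congr rfl (fun l _ => h2 l)]
  rw [Finset.sum_add_distrib]
  simp [Matrix.add_apply, Matrix.mul_apply, Dv]

/-- The entrywise directional derivative commutes with conjugate transpose. -/
lemma matDerivConj {m n : ℕ} (F : ℝ × ℝ → Matrix (Fin m) (Fin n) ℂ) (p v : ℝ × ℝ) :
    Dv v (fun q => (F q)ᴴ) p = (Dv v F p)ᴴ := by
  funext i j
  show fderiv ℝ (fun q => (F q)ᴴ i j) p v = _
  have h1 : (fun q => (F q)ᴴ i j) = fun q => star (F q j i) := by
    funext q; simp [Matrix.conjTranspose_apply]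
  rw [h1, fderiv_star]
  simp [Matrix.conjTranspose_apply, Dv]

/-- Symmetry of mixed entrywise second partial derivatives. -/
lemma mixedPartials (f : ℝ × ℝ → ℂ) (hf : ContDiff ℝ 2 f) (p : ℝ × ℝ) :
    fderiv ℝ (fun q => fderiv ℝ f q (0, 1)) p (1, 0) =
      fderiv ℝ (fun q => fderiv ℝ f q (1, 0)) p (0, 1) := by
  have h1 : ContDiff ℝ 1 (fderiv ℝ f) := hf.fderiv_right (by norm_num)
  have hd : DifferentiableAt ℝ (fderiv ℝ f) p := (h1.differentiable one_ne_zero) p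
  have key : ∀ w v : ℝ × ℝ, fderiv ℝ (fun q => fderiv ℝ f q w) p v =
      fderiv ℝ (fderiv ℝ f) p v w := by
    intro w v
    rw [fderiv_clm_apply hd (differentiableAt_const w)]
    simp
  rw [key, key]
  exact second_derivative_symmetric
    (fun y => ((hf.differentiable two_ne_zero) y).hasFDerivAt) hd.hasFDerivAt _ _

theorem variation_of_connection_is_covariant_derivative {m n : ℕ}
    (U : ℝ × ℝ → Matrix (Fin m) (Fin n) ℂ)
    (hU : ∀ i j, ContDiff ℝ 2 (fun p : ℝ × ℝ => U p i j))
    (hunit : ∀ p : ℝ × ℝ, (U p)ᴴ * U p = 1)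
    (hP : ∀ p : ℝ × ℝ, Dt (fun q => U q * (U q)ᴴ) p = 0) :
    ∀ p : ℝ × ℝ,
      Dt (fun q => (U q)ᴴ * Dx U q) p =
        Dx (fun q => (U q)ᴴ * Dt U q) p
          + ((U p)ᴴ * Dx U p) * ((U p)ᴴ * Dt U p)
          - ((U p)ᴴ * Dt U p) * ((U p)ᴴ * Dx U p) := by
  intro p
  simp only [Dt_eq_Dv, Dx_eq_Dv] at hP ⊢
  -- basic differentiability facts
  have hdU : ∀ i j, DifferentiableAt ℝ (fun q => U q i j) p :=
    fun i j => ((hU i j).differentiable two_ne_zero) p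
  have hdU' : ∀ (i j) (w : ℝ × ℝ),
      DifferentiableAt ℝ (fun q => Dv w U q i j) p := by
    intro i j w
    have h1 : ContDiff ℝ 1 (fderiv ℝ (fun r => U r i j)) :=
      (hU i j).fderiv_right (by norm_num)
    exact ((h1.differentiable one_ne_zero) p).clm_apply (differentiableAt_const w)
  have hdUH : ∀ i j, DifferentiableAt ℝ (fun q => (U q)ᴴ i j) p := by
    intro i j
    have : (fun q => (U q)ᴴ i j) = fun q => star (U q j i) := by
      funext q; simp [Matrix.conjTranspose_apply]
    rw [this]; exact (hdU j i).star
  set Up := U p with hUp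
  set Ut := Dv (1, 0) U p with hUt
  set Ux := Dv (0, 1) U p with hUx
  -- derivative of the constant map `q ↦ (U q)ᴴ * U q = 1` vanishes
  have hzero : ∀ v : ℝ × ℝ,
      Dv v (fun q => (U q)ᴴ * U q) p = (0 : Matrix (Fin n) (Fin n) ℂ) := by
    intro v
    funext i j
    show fderiv ℝ (fun q => ((U q)ᴴ * U q) i j) p v = _
    have : (fun q => ((U q)ᴴ * U q) i j) = fun _ => (1 : Matrix (Fin n) (Fin n) ℂ) i j := by
      funext q; rw [hunit q]
    rw [this, fderiv_const_apply]
    simp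
  have hconst_t : (Ut)ᴴ * Up + Upᴴ * Ut = 0 := by
    have h := matDerivMul (fun q => (U q)ᴴ) U p (1, 0) hdUH hdU
    rw [matDerivConj U p (1, 0), hzero (1, 0)] at h
    exact h.symm
  have hconst_x : (Ux)ᴴ * Up + Upᴴ * Ux = 0 := by
    have h := matDerivMul (fun q => (U q)ᴴ) U p (0, 1) hdUH hdU
    rw [matDerivConj U p (0, 1), hzero (0, 1)] at h
    exact h.symm
  -- the projector condition
  have hproj : Ut * Upᴴ + Up * (Ut)ᴴ = 0 := by
    have h := matDerivMul U (fun q => (U q)ᴴ) p (1, 0) hdU hdUH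
    rw [matDerivConj U p (1, 0), hP p] at h
    exact h.symm
  -- expand the two sides using the product rule
  have hLHS : Dv (1, 0) (fun q => (U q)ᴴ * Dv (0, 1) U q) p =
      (Ut)ᴴ * Ux + Upᴴ * Dv (1, 0) (fun q => Dv (0, 1) U q) p := by
    have h := matDerivMul (fun q => (U q)ᴴ) (fun q => Dv (0, 1) U q) p (1, 0) hdUH
      (fun i j => hdU' i j (0, 1))
    rw [matDerivConj U p (1, 0)] at h
    exact h
  have hRHS : Dv (0, 1) (fun q => (U q)ᴴ * Dv (1, 0) U q) p =
      (Ux)ᴴ * Ut + Upᴴ * Dv (0, 1) (fun q => Dv (1, 0) U q) p := by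
    have h := matDerivMul (fun q => (U q)ᴴ) (fun q => Dv (1, 0) U q) p (0, 1) hdUH
      (fun i j => hdU' i j (1, 0))
    rw [matDerivConj U p (0, 1)] at h
    exact h
  -- symmetry of mixed partial derivatives
  have hmix : Dv (1, 0) (fun q => Dv (0, 1) U q) p = Dv (0, 1) (fun q => Dv (1, 0) U q) p := by
    funext i j
    exact mixedPartials (fun r => U r i j) (hU i j) p
  -- the key algebraic identities
  have h1 : Upᴴ * Up = 1 := hunit p
  have e1 : Upᴴ * Ut * Upᴴ = -(Ut)ᴴ := by
    have h4 : Ut * Upᴴ = -(Up * (Ut)ᴴ) := eq_neg_of_add_eq_zero_left hproj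
    rw [Matrix.mul_assoc, h4, Matrix.mul_neg, ← Matrix.mul_assoc, h1, Matrix.one_mul]
  have e2 : Up * (Upᴴ * Ut) = Ut := by
    have h3 : Upᴴ * Ut = -((Ut)ᴴ * Up) := eq_neg_of_add_eq_zero_right hconst_t
    have h4 : Up * (Ut)ᴴ = -(Ut * Upᴴ) := eq_neg_of_add_eq_zero_right hproj
    rw [h3, Matrix.mul_neg, ← Matrix.mul_assoc, h4, Matrix.neg_mul, neg_neg,
      Matrix.mul_assoc, h1, Matrix.mul_one]
  have hA : Upᴴ * Ux = -((Ux)ᴴ * Up) := eq_neg_of_add_eq_zero_right hconst_x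
  have hBA : (Upᴴ * Ut) * (Upᴴ * Ux) = -((Ut)ᴴ * Ux) := by
    rw [← Matrix.mul_assoc, Matrix.mul_assoc Upᴴ Ut Upᴴ, ← Matrix.mul_assoc, e1]
    exact Matrix.neg_mul _ _
  have hAB : (Upᴴ * Ux) * (Upᴴ * Ut) = -((Ux)ᴴ * Ut) := by
    rw [hA, Matrix.neg_mul, Matrix.mul_assoc, e2]
  rw [hLHS, hRHS, ← hmix, hAB, hBA]
  abel
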